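/- Let r ≥ 2 and n ≥ 1 be integers, set m = (r-1)n - 1, and let w = e^{2πi/r}. Suppose x_1, ..., x_m are complex numbers such that R_{rn}(X) = X · ∏_{k=1}^{m} ∏_{l=0}^{r-1} (X - x_k w^l). Then ∑_{k=1}^{m} x_k^r = -C_r(rn - 2, 1). -/

import Mathlib

open Polynomial

noncomputable def RBon (r : ℕ) : ℕ → Polynomial ℂ
  | 0 => 0
  | 1 => 1
  | n + 2 => ∑ i ∈ (Finset.range r).attach,
      Polynomial.X ^ (i : ℕ) * RBon r (n + 2 - (r - (i : ℕ)))
  decreasing_by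
    have h := i.2
    rw [Finset.mem_range] at h
    omega

noncomputable def rnomial (r n j : ℕ) : ℕ :=
  ((∑ i ∈ Finset.range r, (Polynomial.X : Polynomial ℕ) ^ i) ^ n).coeff j

lemma RBon_succ (r n : ℕ) :
    RBon r (n + 2) = ∑ i ∈ Finset.range r, X ^ i * RBon r (n + 2 - (r - i)) := by
  rw [RBon]
  exact Finset.sum_attach (Finset.range r) (fun i => X ^ i * RBon r (n + 2 - (r - i)))

lemma RBon_coeff_eq_zero (k : ℕ) :
    ∀ s j, (k + 1) * (s - 1) < j → (RBon (k + 2) s).coeff j = 0 := by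
  intro s
  induction s using Nat.strong_induction_on with
  | _ s ih =>
    rcases s with _ | _ | n
    · intro j _; simp [RBon]
    · intro j hj
      rw [RBon, Polynomial.coeff_one, if_neg (by omega)]
    · intro j hj
      rw [RBon_succ, finset_sum_coeff]
      apply Finset.sum_eq_zero
      intro i hi
      rw [Finset.mem_range] at hi
      rw [X_pow_mul, coeff_mul_X_pow']
      split_ifs with h
      · apply ih _ (by omega)
        simp only [show n + 2 - 1 = n + 1 from by omega] at hj
        have h1 : (k + 1) * (n + 2 - (k + 2 - i) - 1) ≤ (k + 1) * n :=
          Nat.mul_le_mul_left _ (by omega)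
        have h2 : (k + 1) * (n + 1) = (k + 1) * n + (k + 1) := by ring
        omega
      · rfl

lemma RBon_coeff_lead (k : ℕ) :
    ∀ s, 1 ≤ s → (RBon (k + 2) s).coeff ((k + 1) * (s - 1)) = 1 := by
  intro s
  induction s using Nat.strong_induction_on with
  | _ s ih =>
    rcases s with _ | _ | n
    · omega
    · intro _; simp [RBon]
    · intro _
      simp only [show n + 2 - 1 = n + 1 from by omega]
      rw [RBon_succ, finset_sum_coeff,
        Finset.sum_eq_single_of_mem (k + 1) (Finset.mem_range.2 (by omega))]
      · rw [X_pow_mul, coeff_mul_X_pow',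
          if_pos (Nat.le_mul_of_pos_right (k + 1) (by omega))]
        have H := ih (n + 1) (by omega) (by omega)
        simp only [show n + 1 - 1 = n from by omega] at H
        have h2 : (k + 1) * (n + 1) = (k + 1) * n + (k + 1) := by ring
        rw [show n + 2 - (k + 2 - (k + 1)) = n + 1 from by omega,
          show (k + 1) * (n + 1) - (k + 1) = (k + 1) * n from by omega]
        exact H
      · intro i hi hne
        rw [Finset.mem_range] at hi
        rw [X_pow_mul, coeff_mul_X_pow']
        split_ifs with h
        · apply RBon_coeff_eq_zero
          have h1 : (k + 1) * (n + 2 - (k + 2 - i) - 1) ≤ (k + 1) * n :=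
            Nat.mul_le_mul_left _ (by omega)
          have h2 : (k + 1) * (n + 1) = (k + 1) * n + (k + 1) := by ring
          omega
        · rfl

lemma RBon_coeff_sub (k : ℕ) :
    ∀ s, 2 ≤ s →
      (RBon (k + 2) s).coeff ((k + 1) * (s - 1) - (k + 2)) = ((s - 2 : ℕ) : ℂ) := by
  intro s
  induction s using Nat.strong_induction_on with
  | _ s ih =>
    rcases s with _ | _ | _ | _ | n
    · omega
    · omega
    · -- s = 2
      intro _
      rw [show ((2 - 2 : ℕ) : ℂ) = 0 from by norm_num]
      rw [RBon_succ, finset_sum_coeff]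
      apply Finset.sum_eq_zero
      intro i hi
      rw [Finset.mem_range] at hi
      rw [X_pow_mul, coeff_mul_X_pow']
      split_ifs with h
      · rw [show 2 - (k + 2 - i) = 0 from by omega]
        simp [RBon]
      · rfl
    · -- s = 3
      intro _
      rw [show ((3 - 2 : ℕ) : ℂ) = 1 from by norm_num]
      rw [RBon_succ, finset_sum_coeff,
        Finset.sum_eq_single_of_mem k (Finset.mem_range.2 (by omega))]
      · rw [X_pow_mul, coeff_mul_X_pow', if_pos (by omega),
          show 3 - (k + 2 - k) = 1 from by omega,
          show (k + 1) * (3 - 1) - (k + 2) - k = 0 from by omega]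
        simp [RBon]
      · intro i hi hne
        rw [Finset.mem_range] at hi
        rw [X_pow_mul, coeff_mul_X_pow']
        split_ifs with h
        · rcases Nat.lt_or_ge i k with hik | hik
          · rw [show 3 - (k + 2 - i) = 0 from by omega]
            simp [RBon]
          · -- i = k+1
            exfalso
            have : i = k + 1 := by omega
            subst this
            omega
        · rfl
    · -- s = n + 4
      intro _
      simp only [show n + 4 - 1 = n + 3 from by omega, show n + 4 - 2 = n + 2 from by omega]
      rw [RBon_succ, finset_sum_coeff, Finset.sum_range_succ, Finset.sum_range_succ]
      have hD3 : (k + 1) * (n + 3) = (k + 1) * n + 3 * k + 3 := by ring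
      have hD1 : (k + 1) * (n + 3) = (k + 1) * (n + 1) + 2 * (k + 1) := by ring
      have hD2 : (k + 1) * (n + 3) = (k + 1) * (n + 2) + (k + 1) := by ring
      have hz : ∑ i ∈ Finset.range k,
          (X ^ i * RBon (k + 2) (n + 4 - (k + 2 - i))).coeff
            ((k + 1) * (n + 3) - (k + 2)) = 0 := by
        apply Finset.sum_eq_zero
        intro i hi
        rw [Finset.mem_range] at hi
        rw [X_pow_mul, coeff_mul_X_pow']
        split_ifs with h
        · apply RBon_coeff_eq_zero
          have h1 : (k + 1) * (n + 4 - (k + 2 - i) - 1) ≤ (k + 1) * n :=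
            Nat.mul_le_mul_left _ (by omega)
          omega
        · rfl
      rw [hz, zero_add]
      -- term i = k
      have hk1 : (X ^ k * RBon (k + 2) (n + 4 - (k + 2 - k))).coeff
          ((k + 1) * (n + 3) - (k + 2)) = 1 := by
        rw [X_pow_mul, coeff_mul_X_pow', if_pos (by omega),
          show n + 4 - (k + 2 - k) = n + 2 from by omega,
          show (k + 1) * (n + 3) - (k + 2) - k = (k + 1) * (n + 1) from by omega]
        exact RBon_coeff_lead k (n + 2) (by omega)
      -- term i = k + 1
      have hk2 : (X ^ (k + 1) * RBon (k + 2) (n + 4 - (k + 2 - (k + 1)))).coeff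
          ((k + 1) * (n + 3) - (k + 2)) = ((n + 1 : ℕ) : ℂ) := by
        rw [X_pow_mul, coeff_mul_X_pow', if_pos (by omega),
          show n + 4 - (k + 2 - (k + 1)) = n + 3 from by omega,
          show (k + 1) * (n + 3) - (k + 2) - (k + 1) = (k + 1) * (n + 2) - (k + 2) from by omega]
        have H := ih (n + 3) (by omega) (by omega)
        simp only [show n + 3 - 1 = n + 2 from by omega,
          show n + 3 - 2 = n + 1 from by omega] at H
        exact H
      rw [hk1, hk2]
      push_cast
      ring

lemma rnomial_one (r : ℕ) (hr : 2 ≤ r) (N : ℕ) : rnomial r N 1 = N := by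
  have hc0 : (∑ i ∈ Finset.range r, (X : Polynomial ℕ) ^ i).coeff 0 = 1 := by
    rw [finset_sum_coeff]
    rw [Finset.sum_eq_single_of_mem 0 (Finset.mem_range.2 (by omega))]
    · simp
    · intro i hi hne
      rw [coeff_X_pow, if_neg (by omega)]
  have hc1 : (∑ i ∈ Finset.range r, (X : Polynomial ℕ) ^ i).coeff 1 = 1 := by
    rw [finset_sum_coeff]
    rw [Finset.sum_eq_single_of_mem 1 (Finset.mem_range.2 (by omega))]
    · simp
    · intro i hi hne
      rw [coeff_X_pow, if_neg (by omega)]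
  have hp0 : ∀ M, ((∑ i ∈ Finset.range r, (X : Polynomial ℕ) ^ i) ^ M).coeff 0 = 1 := by
    intro M
    rw [Polynomial.coeff_zero_eq_eval_zero, eval_pow, ← Polynomial.coeff_zero_eq_eval_zero, hc0,
      one_pow]
  induction N with
  | zero => simp [rnomial, Polynomial.coeff_one]
  | succ N ihN =>
    unfold rnomial at ihN ⊢
    rw [pow_succ, Polynomial.coeff_mul]
    rw [show (Finset.HasAntidiagonal.antidiagonal 1 : Finset (ℕ × ℕ)) = {(0, 1), (1, 0)} from rfl]
    rw [Finset.sum_insert (by decide), Finset.sum_singleton]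
    simp only [hp0, hc0, hc1, ihN]
    ring

theorem stmt_1 (r n : ℕ) (hr : 2 ≤ r) (hn : 1 ≤ n)
    (m : ℕ) (hm : m = (r - 1) * n - 1)
    (w : ℂ) (hw : w = Complex.exp (2 * Real.pi * Complex.I / r))
    (x : Fin m → ℂ)
    (hfac : RBon r (r * n) =
      Polynomial.X * ∏ k : Fin m, ∏ l ∈ Finset.range r,
        (Polynomial.X - Polynomial.C (x k * w ^ l))) :
    ∑ k : Fin m, x k ^ r = -(rnomial r (r * n - 2) 1 : ℂ) := by
  have hw' : IsPrimitiveRoot w r := by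
    rw [hw]; exact Complex.isPrimitiveRoot_exp r (by omega)
  have hprod : ∀ k : Fin m, ∏ l ∈ Finset.range r, (X - C (x k * w ^ l)) =
      X ^ r - C (x k ^ r) := by
    intro k
    rw [X_pow_sub_C_eq_prod hw' (show 0 < r by omega) (rfl : (x k) ^ r = _)]
    exact Finset.prod_congr rfl fun l _ => by rw [mul_comm]
  simp only [hprod] at hfac
  rcases m with _ | m'
  · -- m = 0 : r = 2, n = 1
    have hA : n ≤ (r - 1) * n := Nat.le_mul_of_pos_left n (by omega)
    have hn1 : n = 1 := by omega
    subst hn1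
    have hr2 : r = 2 := by
      rw [Nat.mul_one] at hm; omega
    subst hr2
    rw [show 2 * 1 - 2 = 0 from rfl, rnomial_one 2 le_rfl 0]
    simp
  · -- m = m' + 1 ≥ 1
    obtain ⟨k, rfl⟩ : ∃ k, r = k + 2 := ⟨r - 2, by omega⟩
    obtain ⟨q, rfl⟩ : ∃ q, n = q + 1 := ⟨n - 1, by omega⟩
    simp only [show k + 2 - 1 = k + 1 from by omega] at hm
    -- key products
    have f1 : (k + 1) * ((k + 2) * (q + 1)) = (k + 2) * ((k + 1) * (q + 1)) := by ring
    have f2 : (k + 1) * ((k + 2) * (q + 1) - 1) = (k + 1) * ((k + 2) * (q + 1)) - (k + 1) := by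
      rw [Nat.mul_sub, Nat.mul_one]
    have f3 : (k + 2) * m' + 2 * (k + 2) = (k + 2) * ((k + 1) * (q + 1)) := by
      have hm2 : m' + 2 = (k + 1) * (q + 1) := by
        have h1 : 1 * 1 ≤ (k + 1) * (q + 1) := Nat.mul_le_mul (by omega) (by omega)
        omega
      calc (k + 2) * m' + 2 * (k + 2) = (k + 2) * (m' + 2) := by ring
        _ = (k + 2) * ((k + 1) * (q + 1)) := by rw [hm2]
    have f4 : k + 1 ≤ (k + 1) * ((k + 2) * (q + 1)) :=
      Nat.le_mul_of_pos_right _ (by positivity)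
    have f5 : (k + 2) * 1 ≤ (k + 2) * (q + 1) := Nat.mul_le_mul_left _ (by omega)
    -- index equality
    have hidx : (k + 1) * ((k + 2) * (q + 1) - 1) - (k + 2) = (k + 2) * m' + 1 := by
      omega
    -- LHS coefficient via RBon_coeff_sub
    have hS := RBon_coeff_sub k ((k + 2) * (q + 1)) (by omega)
    rw [hidx] at hS
    -- RHS coefficient
    have hcoeff := congrArg (fun p : Polynomial ℂ => p.coeff ((k + 2) * m' + 1)) hfac
    rw [hS] at hcoeff
    have hexp : (∏ kk : Fin (m' + 1), ((X : Polynomial ℂ) ^ (k + 2) - C (x kk ^ (k + 2)))) =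
        expand ℂ (k + 2) (∏ kk : Fin (m' + 1), ((X : Polynomial ℂ) - C (x kk ^ (k + 2)))) := by
      rw [map_prod]
      exact Finset.prod_congr rfl fun kk _ => by rw [map_sub, expand_X, expand_C]
    rw [hexp, coeff_X_mul, Polynomial.coeff_expand (by omega),
      if_pos ⟨m', rfl⟩, Nat.mul_div_cancel_left m' (by omega)] at hcoeff
    -- Vieta
    set Q : Polynomial ℂ := ∏ kk : Fin (m' + 1), ((X : Polynomial ℂ) - C (x kk ^ (k + 2))) with hQ
    have hdeg : Q.natDegree = m' + 1 := by
      rw [hQ, natDegree_prod_of_monic _ _ fun kk _ => monic_X_sub_C _,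
        Finset.sum_congr rfl fun kk _ => natDegree_X_sub_C _]
      simp
    have hnext : Q.coeff m' = -∑ kk : Fin (m' + 1), x kk ^ (k + 2) := by
      have h1 := prod_X_sub_C_nextCoeff (s := (Finset.univ : Finset (Fin (m' + 1))))
        (fun kk => x kk ^ (k + 2))
      rw [← hQ] at h1
      rw [← h1, nextCoeff_of_natDegree_pos (by rw [hdeg]; omega), hdeg]
      norm_num
    rw [hnext] at hcoeff
    rw [rnomial_one (k + 2) (by omega) _]
    linear_combination hcoeff
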